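/- Let k ≥ 1 be an integer and α ∈ (0,1). Then for every real θ, (1 − (1/k)∑_{j=1}^k e^{iθj})^α = ∑_{y=0}^∞ e^{iθy} · ∑_{x ∈ Ω(k,y)} (−1)^{ζ(x)} (∏_{l=0}^{ζ(x)−1}(α − l)) / (Π!(x) · k^{ζ(x)}), where the left-hand side is the principal complex power. Consequently, the characteristic exponent of the space-fractional Poisson process of order k corresponds to the Lévy measure ν(dx) = k^α λ^α ∑_{y=1}^∞ (−1)^{y+1} ∑_{x ∈ Ω(k,y)} (∏_{l=0}^{ζ(x)−1}(α−l)) (−1)^{ζ(x)−y−1} / (Π!(x) k^{ζ(x)}) δ_y(dx) as asserted in the Lévy–Khintchine representation. -/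

import Mathlib

open scoped BigOperators

/-- `Omega k n` is the (finite) set of tuples `(x₁,…,x_k)` of non-negative integers with
`x₁ + 2·x₂ + ⋯ + k·x_k = n`. -/
def Omega (k n : ℕ) : Finset (Fin k → ℕ) :=
  (Fintype.piFinset fun _ => Finset.range (n + 1)).filter
    (fun x => ∑ i, (i.1 + 1) * x i = n)

/-- `ζ(x) = x₁ + ⋯ + x_k`. -/
def zeta {k : ℕ} (x : Fin k → ℕ) : ℕ := ∑ i, x i

/-- `Π!(x) = x₁! ⋯ x_k!`. -/
def pifact {k : ℕ} (x : Fin k → ℕ) : ℕ := ∏ i, (x i).factorial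

/-- `c_k(n, y) = ∑_{x ∈ Ω(k,n)} y^{ζ(x)} / Π!(x)`. -/
noncomputable def ck (k n : ℕ) (y : ℝ) : ℝ :=
  ∑ x ∈ Omega k n, y ^ zeta x / (pifact x : ℝ)

noncomputable def bcoef (α : ℝ) (n : ℕ) : ℝ := (∏ l ∈ Finset.range n, (α - l)) / n.factorial

noncomputable def dprod (α : ℝ) (n : ℕ) : ℝ := ∏ m ∈ Finset.range n, (1 - α / (m + 1))

lemma bcoef_zero (α : ℝ) : bcoef α 0 = 1 := by simp [bcoef]

lemma bcoef_succ (α : ℝ) (n : ℕ) :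
    bcoef α (n + 1) = bcoef α n * ((α - n) / (n + 1)) := by
  have h : ((n + 1).factorial : ℝ) = (n + 1) * n.factorial := by
    rw [Nat.factorial_succ]; push_cast; ring
  have h2 : (n.factorial : ℝ) ≠ 0 := Nat.cast_ne_zero.2 n.factorial_ne_zero
  have h3 : ((n : ℝ) + 1) ≠ 0 := by positivity
  rw [bcoef, bcoef, Finset.prod_range_succ, h, div_mul_div_comm, mul_comm ((n:ℝ)+1)]

lemma dprod_succ (α : ℝ) (n : ℕ) :
    dprod α (n + 1) = dprod α n * (1 - α / (n + 1)) := Finset.prod_range_succ _ _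

lemma dprod_mem (hα : α ∈ Set.Ioo (0:ℝ) 1) (n : ℕ) : dprod α n ∈ Set.Ioc (0:ℝ) 1 := by
  obtain ⟨h0, h1⟩ := hα
  induction n with
  | zero => simp [dprod]
  | succ n ih =>
    rw [dprod_succ]
    have hm : (0:ℝ) < (n:ℝ) + 1 := by positivity
    have hf0 : 0 < 1 - α / (n + 1) := by
      have : α / (n + 1) ≤ α / 1 := by
        apply div_le_div_of_nonneg_left h0.le one_pos
        linarith
      simp only [div_one] at this; linarith
    have hf1 : 1 - α / (n + 1) ≤ 1 := by
      have : 0 ≤ α / (n + 1) := by positivity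
      linarith
    constructor
    · exact mul_pos ih.1 hf0
    · exact mul_le_one₀ ih.2 hf0.le hf1

lemma abs_bcoef (hα : α ∈ Set.Ioo (0:ℝ) 1) (n : ℕ) :
    |bcoef α (n + 1)| = α * dprod α n / (n + 1) := by
  obtain ⟨h0, h1⟩ := hα
  induction n with
  | zero => simp [bcoef, dprod, abs_of_pos h0]
  | succ n ih =>
    rw [bcoef_succ, abs_mul, ih, abs_div, dprod_succ]
    have hm : (0:ℝ) < (n:ℝ) + 1 := by positivity
    have hm2 : (0:ℝ) < (n:ℝ) + 1 + 1 := by positivity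
    have habs : |α - ((n:ℝ) + 1)| = ((n:ℝ) + 1) * (1 - α / (n + 1)) := by
      rw [abs_of_nonpos (by linarith), mul_sub, mul_one, mul_div_cancel₀ _ hm.ne']
      ring
    have habs2 : |(n:ℝ) + 1 + 1| = (n:ℝ) + 1 + 1 := abs_of_pos hm2
    push_cast
    rw [habs, habs2]
    have hd := (dprod_mem ⟨h0, h1⟩ n).1
    field_simp
lemma dprod_le_rpow (hα : α ∈ Set.Ioo (0:ℝ) 1) (n : ℕ) :
    dprod α n ≤ ((n:ℝ) + 1) ^ (-α) := by
  obtain ⟨h0, h1⟩ := hα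
  have hfac : ∀ m : ℕ, (0:ℝ) ≤ 1 - α / (m + 1) := by
    intro m
    have : α / ((m:ℝ) + 1) ≤ α / 1 := by
      apply div_le_div_of_nonneg_left h0.le one_pos
      have : (0:ℝ) ≤ (m:ℝ) := Nat.cast_nonneg m
      linarith
    simp only [div_one] at this; linarith
  have step1 : dprod α n ≤ ∏ m ∈ Finset.range n, Real.exp (-(α / (m + 1))) := by
    apply Finset.prod_le_prod (fun m _ => hfac m)
    intro m _
    have := Real.add_one_le_exp (-(α / ((m:ℝ) + 1)))
    linarith
  have step2 : ∏ m ∈ Finset.range n, Real.exp (-(α / ((m:ℝ) + 1)))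
      = Real.exp (-(α * (harmonic n : ℝ))) := by
    rw [← Real.exp_sum]
    congr 1
    have : (harmonic n : ℝ) = ∑ m ∈ Finset.range n, ((m:ℝ) + 1)⁻¹ := by
      rw [harmonic]; push_cast; rfl
    rw [this, Finset.mul_sum, ← Finset.sum_neg_distrib]
    exact Finset.sum_congr rfl fun m _ => by rw [div_eq_mul_inv]
  have step3 : Real.exp (-(α * (harmonic n : ℝ))) ≤ ((n:ℝ) + 1) ^ (-α) := by
    have hlog := log_add_one_le_harmonic n
    have hcast : ((n:ℝ) + 1) = ((n + 1 : ℕ) : ℝ) := by push_cast; ring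
    rw [Real.rpow_def_of_pos (by positivity)]
    apply Real.exp_le_exp.2
    rw [hcast]
    calc -(α * (harmonic n : ℝ)) ≤ -(α * Real.log ((n+1 : ℕ):ℝ)) := by
          apply neg_le_neg
          exact mul_le_mul_of_nonneg_left hlog h0.le
      _ = Real.log ((n+1:ℕ):ℝ) * (-α) := by ring
  calc dprod α n ≤ _ := step1
    _ = _ := step2
    _ ≤ _ := step3

lemma summable_abs_bcoef (hα : α ∈ Set.Ioo (0:ℝ) 1) :
    Summable (fun n => |bcoef α n|) := by
  rw [← summable_nat_add_iff 1]
  have hb : Summable (fun n : ℕ => α * ((n:ℝ) + 1) ^ (-(1 + α))) := by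
    apply Summable.mul_left
    have h1 : Summable (fun n : ℕ => ((n:ℝ)) ^ (-(1+α))) :=
      Real.summable_nat_rpow.2 (by linarith [hα.1])
    have h2 := (summable_nat_add_iff 1).2 h1
    refine h2.congr fun n => ?_
    push_cast; ring_nf
  apply Summable.of_nonneg_of_le (fun n => abs_nonneg _) _ hb
  intro n
  rw [abs_bcoef hα n]
  have hpos : (0:ℝ) < (n:ℝ) + 1 := by positivity
  have hd := dprod_le_rpow hα n
  have key : ((n:ℝ)+1) ^ (-α) / ((n:ℝ)+1) = ((n:ℝ)+1) ^ (-(1+α)) := by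
    rw [div_eq_mul_inv, ← Real.rpow_neg_one ((n:ℝ)+1), ← Real.rpow_add hpos]
    norm_num
  rw [← key, mul_div_assoc]
  gcongr
  exact hα.1.le

lemma abs_bcoef_le_one (hα : α ∈ Set.Ioo (0:ℝ) 1) (n : ℕ) : |bcoef α n| ≤ 1 := by
  cases n with
  | zero => simp [bcoef]
  | succ n =>
    rw [abs_bcoef hα n]
    have hd := (dprod_mem hα n).2
    have hd0 := (dprod_mem hα n).1
    have hpos : (0:ℝ) < (n:ℝ) + 1 := by positivity
    rw [div_le_one hpos]
    have h2 : α * dprod α n ≤ 1 * 1 :=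
      mul_le_mul hα.2.le hd hd0.le zero_le_one
    have h3 : (0:ℝ) ≤ (n:ℝ) := Nat.cast_nonneg n
    linarith
lemma summable_bcoef_pow (hα : α ∈ Set.Ioo (0:ℝ) 1) {w : ℂ} (hw : ‖w‖ ≤ 1) :
    Summable (fun n => (bcoef α n : ℂ) * w ^ n) := by
  apply Summable.of_norm_bounded (summable_abs_bcoef hα)
  intro n
  rw [norm_mul, norm_pow, Complex.norm_real, Real.norm_eq_abs]
  have h1 : ‖w‖ ^ n ≤ 1 := pow_le_one₀ (norm_nonneg w) hw
  nlinarith [abs_nonneg (bcoef α n)]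

lemma summable_deriv_terms (hα : α ∈ Set.Ioo (0:ℝ) 1) {r : ℝ} (hr0 : 0 < r) (hr1 : r < 1) :
    Summable (fun n : ℕ => (n : ℝ) * r ^ (n - 1)) := by
  rw [← summable_nat_add_iff 1]
  have h1 : Summable (fun n : ℕ => (n : ℝ) * r ^ n) := by
    have := summable_pow_mul_geometric_of_norm_lt_one (R := ℝ) 1
      (r := r) (by rw [Real.norm_eq_abs, abs_of_pos hr0]; exact hr1)
    exact this.congr fun n => by ring
  have h2 : Summable (fun n : ℕ => r ^ n) :=
    summable_geometric_of_lt_one hr0.le hr1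
  refine (h1.add h2).congr fun n => ?_
  have hn : n + 1 - 1 = n := rfl
  rw [hn]
  push_cast
  ring

lemma hasDerivAt_f (hα : α ∈ Set.Ioo (0:ℝ) 1) {y : ℂ} (hy : ‖y‖ < 1) :
    HasDerivAt (fun z : ℂ => ∑' n, (bcoef α n : ℂ) * z ^ n)
      (∑' n, (bcoef α n : ℂ) * ((n : ℂ) * y ^ (n - 1))) y := by
  set r : ℝ := (‖y‖ + 1) / 2 with hr
  have hr0 : 0 < r := by positivity
  have hr1 : r < 1 := by rw [hr]; linarith
  have hyr : ‖y‖ < r := by rw [hr]; linarith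
  apply hasDerivAt_tsum_of_isPreconnected (u := fun n : ℕ => (n : ℝ) * r ^ (n - 1))
    (summable_deriv_terms hα hr0 hr1) Metric.isOpen_ball
    (convex_ball (0:ℂ) r).isPreconnected
    (g' := fun n z => (bcoef α n : ℂ) * ((n : ℂ) * z ^ (n - 1)))
    (y₀ := 0)
  · intro n z _
    exact (hasDerivAt_pow n z).const_mul _
  · intro n z hz
    rw [Metric.mem_ball, dist_zero_right] at hz
    rw [norm_mul, norm_mul, Complex.norm_real, Real.norm_eq_abs, Complex.norm_natCast,
      norm_pow]
    have h1 : |bcoef α n| ≤ 1 := abs_bcoef_le_one hα n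
    have h2 : ‖z‖ ^ (n - 1) ≤ r ^ (n - 1) :=
      pow_le_pow_left₀ (norm_nonneg z) hz.le _
    have h3 : (0:ℝ) ≤ (n:ℝ) := Nat.cast_nonneg n
    have h4 : (0:ℝ) ≤ ‖z‖ ^ (n-1) := by positivity
    calc |bcoef α n| * ((n:ℝ) * ‖z‖ ^ (n-1)) ≤ 1 * ((n:ℝ) * ‖z‖ ^ (n-1)) :=
          mul_le_mul_of_nonneg_right h1 (mul_nonneg h3 h4)
      _ = (n:ℝ) * ‖z‖ ^ (n-1) := one_mul _
      _ ≤ (n:ℝ) * r ^ (n-1) := mul_le_mul_of_nonneg_left h2 h3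
  · rw [Metric.mem_ball, dist_zero_right, norm_zero]; exact hr0
  · exact summable_bcoef_pow hα (by norm_num)
  · rw [Metric.mem_ball, dist_zero_right]; exact hyr
lemma summable_deriv_terms_c (hα : α ∈ Set.Ioo (0:ℝ) 1) {y : ℂ} (hy : ‖y‖ < 1) :
    Summable (fun n : ℕ => (bcoef α n : ℂ) * ((n : ℂ) * y ^ (n - 1))) := by
  set r : ℝ := (‖y‖ + 1) / 2 with hr
  have hr0 : 0 < r := by positivity
  have hr1 : r < 1 := by rw [hr]; linarith
  have hyr : ‖y‖ < r := by rw [hr]; linarith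
  apply Summable.of_norm_bounded (summable_deriv_terms hα hr0 hr1)
  intro n
  rw [norm_mul, norm_mul, Complex.norm_real, Real.norm_eq_abs, Complex.norm_natCast, norm_pow]
  have h1 : |bcoef α n| ≤ 1 := abs_bcoef_le_one hα n
  have h2 : ‖y‖ ^ (n - 1) ≤ r ^ (n - 1) := pow_le_pow_left₀ (norm_nonneg y) hyr.le _
  have h3 : (0:ℝ) ≤ (n:ℝ) := Nat.cast_nonneg n
  have h4 : (0:ℝ) ≤ ‖y‖ ^ (n-1) := by positivity
  calc |bcoef α n| * ((n:ℝ) * ‖y‖ ^ (n-1)) ≤ 1 * ((n:ℝ) * ‖y‖ ^ (n-1)) :=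
        mul_le_mul_of_nonneg_right h1 (mul_nonneg h3 h4)
    _ = (n:ℝ) * ‖y‖ ^ (n-1) := one_mul _
    _ ≤ (n:ℝ) * r ^ (n-1) := mul_le_mul_of_nonneg_left h2 h3

lemma ode_identity (hα : α ∈ Set.Ioo (0:ℝ) 1) {y : ℂ} (hy : ‖y‖ < 1) :
    (1 + y) * (∑' n, (bcoef α n : ℂ) * ((n : ℂ) * y ^ (n - 1)))
      = (α : ℂ) * ∑' n, (bcoef α n : ℂ) * y ^ n := by
  have S1 := summable_deriv_terms_c hα hy
  have Ssh : Summable (fun n : ℕ => (bcoef α (n+1) : ℂ) * (((n:ℂ)+1) * y ^ n)) := by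
    have := (summable_nat_add_iff 1).2 S1
    refine this.congr fun n => ?_
    have hn : n + 1 - 1 = n := rfl
    rw [hn]; push_cast; ring
  -- D = ∑' n, b_{n+1} (n+1) y^n
  have hD : (∑' n, (bcoef α n : ℂ) * ((n : ℂ) * y ^ (n - 1)))
      = ∑' n, (bcoef α (n+1) : ℂ) * (((n:ℂ)+1) * y ^ n) := by
    rw [S1.tsum_eq_zero_add]
    simp only [Nat.cast_zero, zero_mul, mul_zero, zero_add]
    refine tsum_congr fun n => ?_
    have hn : n + 1 - 1 = n := rfl
    rw [hn]; push_cast; ring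
  -- recurrence: b_{n+1} * (n+1) = (α - n) * b_n
  have hrec : ∀ n : ℕ, (bcoef α (n+1) : ℂ) * ((n:ℂ)+1) = ((α:ℂ) - n) * (bcoef α n : ℂ) := by
    intro n
    have h := bcoef_succ α n
    have hne : ((n:ℝ) + 1) ≠ 0 := by positivity
    have : bcoef α (n+1) * ((n:ℝ)+1) = (α - n) * bcoef α n := by
      rw [h]; field_simp
    calc (bcoef α (n+1) : ℂ) * ((n:ℂ)+1) = ((bcoef α (n+1) * ((n:ℝ)+1) : ℝ) : ℂ) := by
          push_cast; ring
      _ = (((α - n) * bcoef α n : ℝ) : ℂ) := by rw [this]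
      _ = ((α:ℂ) - n) * (bcoef α n : ℂ) := by push_cast; ring
  have hD2 : (∑' n, (bcoef α n : ℂ) * ((n : ℂ) * y ^ (n - 1)))
      = ∑' n, ((α:ℂ) - n) * (bcoef α n : ℂ) * y ^ n := by
    rw [hD]
    refine tsum_congr fun n => ?_
    rw [← mul_assoc, hrec n]
  have SA : Summable (fun n : ℕ => ((α:ℂ) - n) * (bcoef α n : ℂ) * y ^ n) := by
    refine Ssh.congr fun n => ?_
    rw [← mul_assoc, hrec n]
  have SB : Summable (fun n : ℕ => (n:ℂ) * ((bcoef α n : ℂ) * y ^ n)) := by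
    refine (S1.mul_left y).congr fun n => ?_
    cases n with
    | zero => simp
    | succ m =>
      have hn : m + 1 - 1 = m := rfl
      rw [hn]; push_cast; ring
  have hyD : y * (∑' n, (bcoef α n : ℂ) * ((n : ℂ) * y ^ (n - 1)))
      = ∑' n : ℕ, (n:ℂ) * ((bcoef α n : ℂ) * y ^ n) := by
    rw [← tsum_mul_left]
    refine tsum_congr fun n => ?_
    cases n with
    | zero => simp
    | succ m =>
      have hn : m + 1 - 1 = m := rfl
      rw [hn]; push_cast; ring
  rw [add_mul, one_mul, hyD, hD2, ← SA.tsum_add SB, ← tsum_mul_left]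
  refine tsum_congr fun n => ?_
  ring
lemma re_one_add_pos {y : ℂ} (hy : ‖y‖ < 1) : 0 < (1 + y).re := by
  have h : |y.re| ≤ ‖y‖ := Complex.abs_re_le_norm y
  have := abs_le.1 h
  simp only [Complex.add_re, Complex.one_re]
  linarith [this.1]

lemma hasSum_binomial (hα : α ∈ Set.Ioo (0:ℝ) 1) {w : ℂ} (hw : ‖w‖ ≤ 1) :
    HasSum (fun n => (bcoef α n : ℂ) * w ^ n) ((1 + w) ^ (α : ℂ)) := by
  set f : ℂ → ℂ := fun z => ∑' n, (bcoef α n : ℂ) * z ^ n with hf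
  set g : ℂ → ℂ := fun z => (1 + z) ^ (α : ℂ) with hg
  set F : ℂ → ℂ := fun z => f z * (1 + z) ^ (-(α : ℂ)) with hF
  -- F has zero derivative on the open ball
  have hFderiv : ∀ y ∈ Metric.ball (0:ℂ) 1, HasDerivAt F 0 y := by
    intro y hy
    rw [Metric.mem_ball, dist_zero_right] at hy
    have hre : 0 < (1 + y).re := re_one_add_pos hy
    have hne : (1 : ℂ) + y ≠ 0 := fun h => by simp [h] at hre
    have hslit : (1 : ℂ) + y ∈ Complex.slitPlane := Complex.mem_slitPlane_iff.2 (Or.inl hre)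
    have hd1 : HasDerivAt f (∑' n, (bcoef α n : ℂ) * ((n : ℂ) * y ^ (n - 1))) y :=
      hasDerivAt_f hα hy
    have hd2 : HasDerivAt (fun z : ℂ => (1 + z) ^ (-(α:ℂ)))
        ((-(α:ℂ)) * (1 + y) ^ (-(α:ℂ) - 1) * 1) y :=
      ((hasDerivAt_id y).const_add 1).cpow_const hslit
    have hd := hd1.mul hd2
    refine hd.congr_deriv (Eq.symm ?_)
    have hsplit : (1 + y) ^ (-(α:ℂ)) = (1 + y) ^ (-(α:ℂ) - 1) * (1 + y) := by
      have h := Complex.cpow_add (-(α:ℂ) - 1) 1 hne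
      rw [Complex.cpow_one] at h
      rw [← h]
      norm_num
    have hode := ode_identity hα hy
    rw [hsplit]
    set D := ∑' n, (bcoef α n : ℂ) * ((n : ℂ) * y ^ (n - 1))
    calc (0:ℂ) = (1 + y) ^ (-(α:ℂ) - 1) * ((1 + y) * D - (α:ℂ) * f y) := by
          rw [hode]; ring
      _ = D * ((1 + y) ^ (-(α:ℂ) - 1) * (1 + y)) + f y * (-(α:ℂ) * (1 + y) ^ (-(α:ℂ) - 1) * 1) := by
          ring
  -- F is constant on the ball
  have hFconst : ∀ y ∈ Metric.ball (0:ℂ) 1, F y = F 0 := by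
    intro y hy
    have hdiff : DifferentiableOn ℂ F (Metric.ball (0:ℂ) 1) := fun z hz =>
      ((hFderiv z hz).differentiableAt).differentiableWithinAt
    have hzero : ∀ z ∈ Metric.ball (0:ℂ) 1, fderivWithin ℂ F (Metric.ball (0:ℂ) 1) z = 0 := by
      intro z hz
      have hfd := (hFderiv z hz).hasFDerivAt
      rw [fderivWithin_of_isOpen Metric.isOpen_ball hz, hfd.fderiv]
      ext v
      simp
    exact (convex_ball (0:ℂ) 1).is_const_of_fderivWithin_eq_zero hdiff hzero hy
      (by simp [Metric.mem_ball])
  have hF0 : F 0 = 1 := by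
    have hf0 : f 0 = 1 := by
      rw [hf]
      simp only []
      rw [tsum_eq_single 0 (fun n hn => by
        rcases Nat.exists_eq_succ_of_ne_zero hn with ⟨m, rfl⟩
        simp [pow_succ])]
      simp [bcoef]
    rw [hF]
    simp only []
    rw [hf0, add_zero, Complex.one_cpow, one_mul]
  -- f = g on the open ball
  have hEq : Set.EqOn f g (Metric.ball (0:ℂ) 1) := by
    intro y hy
    have h1 := (hFconst y hy).trans hF0
    rw [hF] at h1
    simp only [] at h1
    rw [Metric.mem_ball, dist_zero_right] at hy
    have hre : 0 < (1 + y).re := re_one_add_pos hy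
    have hne : (1 : ℂ) + y ≠ 0 := fun h => by simp [h] at hre
    have hgne : (1 + y) ^ (α:ℂ) ≠ 0 := by
      rw [Ne, Complex.cpow_eq_zero_iff]
      tauto
    rw [Complex.cpow_neg] at h1
    rw [hg]
    simp only []
    field_simp at h1
    exact h1
  -- extend to the closed ball by continuity
  have hfc : ContinuousOn f (Metric.closedBall (0:ℂ) 1) := by
    apply continuousOn_tsum (fun n => (Continuous.continuousOn (by continuity)))
      (summable_abs_bcoef hα)
    intro n z hz
    rw [Metric.mem_closedBall, dist_zero_right] at hz
    rw [norm_mul, norm_pow, Complex.norm_real, Real.norm_eq_abs]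
    have h1 : ‖z‖ ^ n ≤ 1 := pow_le_one₀ (norm_nonneg z) hz
    nlinarith [abs_nonneg (bcoef α n)]
  have hgc : ContinuousOn g (Metric.closedBall (0:ℂ) 1) := by
    intro z hz
    rw [Metric.mem_closedBall, dist_zero_right] at hz
    have h1 : 0 ≤ (1 + z).re ∨ (1 + z).im ≠ 0 := by
      left
      have h : |z.re| ≤ ‖z‖ := Complex.abs_re_le_norm z
      have := (abs_le.1 h).1
      simp only [Complex.add_re, Complex.one_re]
      linarith
    have h2 : 0 < ((α:ℂ)).re := by simpa using hα.1
    have hc : ContinuousAt (fun x : ℂ => x ^ (α:ℂ)) (1 + z) :=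
      Complex.continuousAt_cpow_const_of_re_pos h1 h2
    exact (hc.comp ((continuous_const.add continuous_id).continuousAt)).continuousWithinAt
  have hEqClosed : Set.EqOn f g (Metric.closedBall (0:ℂ) 1) := by
    have hcl : closure (Metric.ball (0:ℂ) 1) = Metric.closedBall (0:ℂ) 1 :=
      closure_ball (0:ℂ) one_ne_zero
    exact hEq.of_subset_closure hfc hgc Metric.ball_subset_closedBall (by rw [hcl])
  have hwmem : w ∈ Metric.closedBall (0:ℂ) 1 := by
    rw [Metric.mem_closedBall, dist_zero_right]; exact hw
  have := (summable_bcoef_pow hα hw).hasSum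
  rwa [show (∑' n, (bcoef α n : ℂ) * w ^ n) = (1 + w) ^ (α:ℂ) from hEqClosed hwmem] at this
noncomputable def cfun (α : ℝ) {k : ℕ} (x : Fin k → ℕ) : ℝ :=
  (-1 : ℝ) ^ zeta x * (∏ l ∈ Finset.range (zeta x), (α - l)) /
    ((pifact x : ℝ) * (k : ℝ) ^ zeta x)

def ysum {k : ℕ} (x : Fin k → ℕ) : ℕ := ∑ i, (i.1 + 1) * x i

noncomputable def tfun (α θ : ℝ) {k : ℕ} (x : Fin k → ℕ) : ℂ :=
  Complex.exp (Complex.I * θ * (ysum x : ℕ)) * (cfun α x : ℂ)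

lemma mem_piAntidiag_iff {k : ℕ} (x : Fin k → ℕ) (n : ℕ) :
    x ∈ Finset.piAntidiag (Finset.univ : Finset (Fin k)) n ↔ zeta x = n := by
  rw [Finset.mem_piAntidiag]
  simp [zeta]

lemma mem_Omega_iff {k : ℕ} (x : Fin k → ℕ) (y : ℕ) :
    x ∈ Omega k y ↔ ysum x = y := by
  constructor
  · intro hx; exact (Finset.mem_filter.1 hx).2
  · intro hx
    refine Finset.mem_filter.2 ⟨?_, hx⟩
    rw [Fintype.mem_piFinset]
    intro i
    rw [Finset.mem_range, Nat.lt_succ_iff]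
    calc x i ≤ (i.1 + 1) * x i := Nat.le_mul_of_pos_left _ (Nat.succ_pos _)
      _ ≤ ∑ j, (j.1 + 1) * x j := Finset.single_le_sum
          (f := fun j : Fin k => (j.1 + 1) * x j) (fun j _ => Nat.zero_le _)
          (Finset.mem_univ i)
      _ = y := hx

lemma pifact_pos {k : ℕ} (x : Fin k → ℕ) : 0 < pifact x :=
  Finset.prod_pos fun i _ => (x i).factorial_pos

lemma pifact_mul_multinomial {k : ℕ} (x : Fin k → ℕ) :
    (pifact x) * (Nat.multinomial Finset.univ x) = (zeta x).factorial :=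
  Nat.multinomial_spec _ _

lemma bcoef_mul_multinomial (α : ℝ) {k : ℕ} (x : Fin k → ℕ) :
    bcoef α (zeta x) * (Nat.multinomial Finset.univ x : ℝ)
      = (∏ l ∈ Finset.range (zeta x), (α - l)) / (pifact x : ℝ) := by
  have h : ((pifact x : ℝ)) * (Nat.multinomial Finset.univ x : ℝ)
      = ((zeta x).factorial : ℝ) := by exact_mod_cast pifact_mul_multinomial x
  have hpf : (pifact x : ℝ) ≠ 0 := Nat.cast_ne_zero.2 (pifact_pos x).ne'
  have hfac : ((zeta x).factorial : ℝ) ≠ 0 := Nat.cast_ne_zero.2 (zeta x).factorial_ne_zero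
  rw [bcoef, div_mul_eq_mul_div, div_eq_div_iff hfac hpf]
  linear_combination (∏ l ∈ Finset.range (zeta x), (α - (l:ℝ))) * h

lemma norm_exp_Itheta (θ : ℝ) (w : ℂ) (hw : w.im = 0) :
    ‖Complex.exp (Complex.I * θ * w)‖ = 1 := by
  rw [Complex.norm_exp]
  have : (Complex.I * θ * w).re = 0 := by
    simp [Complex.mul_re, Complex.mul_im, hw]
  rw [this, Real.exp_zero]

lemma prod_exp_pow {k : ℕ} (θ : ℝ) (x : Fin k → ℕ) :
    ∏ i : Fin k, Complex.exp (Complex.I * θ * (i.1 + 1)) ^ (x i)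
      = Complex.exp (Complex.I * θ * (ysum x : ℕ)) := by
  calc ∏ i : Fin k, Complex.exp (Complex.I * θ * (i.1 + 1)) ^ (x i)
      = ∏ i : Fin k, Complex.exp ((x i : ℂ) * (Complex.I * θ * (i.1 + 1))) := by
        refine Finset.prod_congr rfl fun i _ => ?_
        rw [← Complex.exp_nat_mul]
    _ = Complex.exp (∑ i : Fin k, (x i : ℂ) * (Complex.I * θ * (i.1 + 1))) := by
        rw [Complex.exp_sum]
    _ = Complex.exp (Complex.I * θ * (ysum x : ℕ)) := by
        congr 1
        rw [ysum]
        push_cast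
        rw [Finset.mul_sum]
        exact Finset.sum_congr rfl fun i _ => by ring

lemma tfun_eq (α θ : ℝ) {k : ℕ} (hk : 1 ≤ k) (x : Fin k → ℕ) :
    tfun α θ x = (bcoef α (zeta x) : ℂ) * (Nat.multinomial Finset.univ x : ℂ) *
      ∏ i : Fin k, (-(Complex.exp (Complex.I * θ * (i.1 + 1)) / k)) ^ (x i) := by
  have hk0 : (k : ℂ) ≠ 0 := Nat.cast_ne_zero.2 (by omega)
  have hprod : ∏ i : Fin k, (-(Complex.exp (Complex.I * θ * (i.1 + 1)) / k)) ^ (x i)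
      = (-1 : ℂ) ^ zeta x * Complex.exp (Complex.I * θ * (ysum x : ℕ)) / (k : ℂ) ^ zeta x := by
    have h1 : ∀ i : Fin k, (-(Complex.exp (Complex.I * θ * (i.1 + 1)) / k)) ^ (x i)
        = (-1 : ℂ) ^ (x i) * Complex.exp (Complex.I * θ * (i.1 + 1)) ^ (x i) / (k : ℂ) ^ (x i) := by
      intro i
      rw [neg_div', neg_pow, div_pow]  
      ring
    rw [Finset.prod_congr rfl fun i _ => h1 i]
    rw [Finset.prod_div_distrib, Finset.prod_mul_distrib, Finset.prod_pow_eq_pow_sum,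
      Finset.prod_pow_eq_pow_sum, prod_exp_pow, zeta]
  rw [hprod, tfun]
  have hmul := bcoef_mul_multinomial α x
  have key : (bcoef α (zeta x) : ℂ) * (Nat.multinomial Finset.univ x : ℂ)
      = ((∏ l ∈ Finset.range (zeta x), (α - l)) / (pifact x : ℝ) : ℝ) := by
    rw [← hmul]; push_cast; ring
  rw [key, cfun]
  push_cast
  ring
lemma norm_tfun (α θ : ℝ) {k : ℕ} (hk : 1 ≤ k) (x : Fin k → ℕ) :
    ‖tfun α θ x‖ = |bcoef α (zeta x)| *
      ((Nat.multinomial Finset.univ x : ℝ) * ((k:ℝ)⁻¹) ^ zeta x) := by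
  rw [tfun_eq α θ hk x, norm_mul, norm_mul, Complex.norm_real, Real.norm_eq_abs,
    Complex.norm_natCast, mul_assoc]
  congr 2
  rw [norm_prod]
  have h : ∀ i : Fin k, ‖(-(Complex.exp (Complex.I * θ * (i.1 + 1)) / k)) ^ (x i)‖
      = ((k:ℝ)⁻¹) ^ (x i) := by
    intro i
    rw [norm_pow, norm_neg, norm_div, norm_exp_Itheta θ _ (by simp), Complex.norm_natCast, one_div]
  rw [Finset.prod_congr rfl fun i _ => h i, Finset.prod_pow_eq_pow_sum, zeta]

lemma sum_multinomial_inv_k {k : ℕ} (hk : 1 ≤ k) (n : ℕ) :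
    ∑ x ∈ Finset.piAntidiag (Finset.univ : Finset (Fin k)) n,
      (Nat.multinomial Finset.univ x : ℝ) * ((k:ℝ)⁻¹) ^ zeta x = 1 := by
  have hk0 : (k:ℝ) ≠ 0 := Nat.cast_ne_zero.2 (by omega)
  have h := Finset.sum_pow_eq_sum_piAntidiag (Finset.univ : Finset (Fin k))
    (fun _ => (k:ℝ)⁻¹) n
  have hsum : (∑ _i : Fin k, (k:ℝ)⁻¹) = 1 := by
    rw [Finset.sum_const, Finset.card_univ, Fintype.card_fin, nsmul_eq_mul]
    field_simp
  rw [hsum, one_pow] at h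
  refine Eq.trans (Finset.sum_congr rfl fun x _ => ?_) h.symm
  rw [Finset.prod_pow_eq_pow_sum]
  rfl

lemma tsum_fiber_finset {k : ℕ} (g : (Fin k → ℕ) → ℕ) (F : ℕ → Finset (Fin k → ℕ))
    (hF : ∀ x n, x ∈ F n ↔ g x = n) {M : Type} [AddCommMonoid M] [TopologicalSpace M]
    (f : (Fin k → ℕ) → M) (n : ℕ) :
    ∑' (c : {x : Fin k → ℕ // g x = n}), f c.1 = ∑ x ∈ F n, f x := by
  calc ∑' (c : {x : Fin k → ℕ // g x = n}), f c.1
      = ∑' (a : {x : Fin k → ℕ // x ∈ F n}),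
          f ((Equiv.subtypeEquivRight (fun x => hF x n)) a).1 :=
        (Equiv.tsum_eq (Equiv.subtypeEquivRight (fun x => hF x n)) _).symm
    _ = ∑' (a : {x : Fin k → ℕ // x ∈ F n}), f a.1 := tsum_congr fun a => rfl
    _ = ∑ x ∈ F n, f x := Finset.tsum_subtype (F n) f

lemma finite_fiber {k : ℕ} (g : (Fin k → ℕ) → ℕ) (F : ℕ → Finset (Fin k → ℕ))
    (hF : ∀ x n, x ∈ F n ↔ g x = n) (n : ℕ) :
    Finite {x : Fin k → ℕ // g x = n} :=
  Finite.of_equiv _ (Equiv.subtypeEquivRight (fun x => hF x n))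

lemma tsum_eq_tsum_fiber {k : ℕ} (g : (Fin k → ℕ) → ℕ) (F : ℕ → Finset (Fin k → ℕ))
    (hF : ∀ x n, x ∈ F n ↔ g x = n) (f : (Fin k → ℕ) → ℂ) (hf : Summable f) :
    ∑' x, f x = ∑' n, ∑ x ∈ F n, f x := by
  have h := hf.hasSum.tsum_fiberwise g
  rw [← h.tsum_eq]
  apply tsum_congr
  intro n
  have e2 : ∀ x : Fin k → ℕ, g x = n ↔ x ∈ g ⁻¹' {n} := fun x => by simp
  calc ∑' (b : (g ⁻¹' {n} : Set (Fin k → ℕ))), f b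
      = ∑' (c : {x : Fin k → ℕ // g x = n}), f ((Equiv.subtypeEquivRight e2) c).1 :=
        (Equiv.tsum_eq (Equiv.subtypeEquivRight e2) _).symm
    _ = ∑' (c : {x : Fin k → ℕ // g x = n}), f c.1 := tsum_congr fun c => rfl
    _ = ∑ x ∈ F n, f x := tsum_fiber_finset g F hF f n

lemma fiber_norm_sum {α θ : ℝ} {k : ℕ} (hα : α ∈ Set.Ioo (0:ℝ) 1) (hk : 1 ≤ k) (n : ℕ) :
    ∑ x ∈ Finset.piAntidiag (Finset.univ : Finset (Fin k)) n, ‖tfun α θ x‖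
      = |bcoef α n| := by
  calc ∑ x ∈ Finset.piAntidiag (Finset.univ : Finset (Fin k)) n, ‖tfun α θ x‖
      = ∑ x ∈ Finset.piAntidiag (Finset.univ : Finset (Fin k)) n,
          |bcoef α n| * ((Nat.multinomial Finset.univ x : ℝ) * ((k:ℝ)⁻¹) ^ zeta x) := by
        refine Finset.sum_congr rfl fun x hx => ?_
        rw [norm_tfun α θ hk x, (mem_piAntidiag_iff x n).1 hx]
    _ = |bcoef α n| * ∑ x ∈ Finset.piAntidiag (Finset.univ : Finset (Fin k)) n,
          (Nat.multinomial Finset.univ x : ℝ) * ((k:ℝ)⁻¹) ^ zeta x := by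
        rw [Finset.mul_sum]
    _ = |bcoef α n| := by rw [sum_multinomial_inv_k hk n, mul_one]

lemma summable_norm_tfun {α : ℝ} (θ : ℝ) {k : ℕ} (hα : α ∈ Set.Ioo (0:ℝ) 1) (hk : 1 ≤ k) :
    Summable (fun x : Fin k → ℕ => ‖tfun α θ x‖) := by
  rw [← (Equiv.sigmaFiberEquiv (zeta : (Fin k → ℕ) → ℕ)).summable_iff]
  apply (summable_sigma_of_nonneg (fun p => norm_nonneg _)).2
  constructor
  · intro n
    have : Finite {x : Fin k → ℕ // zeta x = n} :=
      finite_fiber zeta _ mem_piAntidiag_iff n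
    exact Summable.of_finite
  · refine (summable_abs_bcoef hα).congr fun n => ?_
    have h1 := (tsum_fiber_finset zeta _ mem_piAntidiag_iff
      (fun x : Fin k → ℕ => ‖tfun α θ x‖) n).trans (fiber_norm_sum hα hk n)
    exact h1.symm

lemma summable_tfun {α : ℝ} (θ : ℝ) {k : ℕ} (hα : α ∈ Set.Ioo (0:ℝ) 1) (hk : 1 ≤ k) :
    Summable (fun x : Fin k → ℕ => tfun α θ x) :=
  (summable_norm_tfun θ hα hk).of_norm

lemma fiber_tfun_sum_zeta {α θ : ℝ} {k : ℕ} (hk : 1 ≤ k) (n : ℕ) :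
    ∑ x ∈ Finset.piAntidiag (Finset.univ : Finset (Fin k)) n, tfun α θ x
      = (bcoef α n : ℂ) *
        (∑ i : Fin k, (-(Complex.exp (Complex.I * θ * (i.1 + 1)) / k))) ^ n := by
  rw [Finset.sum_pow_eq_sum_piAntidiag (Finset.univ : Finset (Fin k))
    (fun i => -(Complex.exp (Complex.I * θ * (i.1 + 1)) / k)) n, Finset.mul_sum]
  refine Finset.sum_congr rfl fun x hx => ?_
  rw [tfun_eq α θ hk x, (mem_piAntidiag_iff x n).1 hx]
  ring

lemma fiber_tfun_sum_Y {α θ : ℝ} {k : ℕ} (y : ℕ) :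
    ∑ x ∈ Omega k y, tfun α θ x
      = Complex.exp (Complex.I * θ * y) * ((∑ x ∈ Omega k y, cfun α x : ℝ) : ℂ) := by
  push_cast
  rw [Finset.mul_sum]
  refine Finset.sum_congr rfl fun x hx => ?_
  rw [tfun, (mem_Omega_iff x y).1 hx]
theorem levy_exponent_expansion_space_fractional_poisson_of_order_k
    (k : ℕ) (hk : 1 ≤ k) (α : ℝ) (hα : α ∈ Set.Ioo (0 : ℝ) 1) (θ : ℝ) :
    (1 - (1 / (k : ℂ)) * ∑ j ∈ Finset.range k, Complex.exp (Complex.I * θ * (j + 1)))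
        ^ (α : ℂ) =
      ∑' y : ℕ, Complex.exp (Complex.I * θ * y) *
        ((∑ x ∈ Omega k y,
          (-1 : ℝ) ^ zeta x * (∏ l ∈ Finset.range (zeta x), (α - l)) /
            ((pifact x : ℝ) * (k : ℝ) ^ zeta x) : ℝ) : ℂ) := by
  have hk0 : (k:ℂ) ≠ 0 := Nat.cast_ne_zero.2 (by omega)
  have hk0' : (k:ℝ) ≠ 0 := Nat.cast_ne_zero.2 (by omega)
  set Z : ℂ := ∑ i : Fin k, (-(Complex.exp (Complex.I * θ * (i.1 + 1)) / k)) with hZdef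
  have hZ1 : (1 : ℂ) + Z =
      1 - (1 / (k : ℂ)) * ∑ j ∈ Finset.range k, Complex.exp (Complex.I * θ * (j + 1)) := by
    rw [hZdef, ← Fin.sum_univ_eq_sum_range
      (fun j => Complex.exp (Complex.I * θ * ((j:ℕ) + 1))) k]
    rw [sub_eq_add_neg]
    congr 1
    rw [Finset.mul_sum, ← Finset.sum_neg_distrib]
    refine Finset.sum_congr rfl fun i _ => ?_
    rw [div_eq_mul_inv]
    ring
  have hnormZ : ‖Z‖ ≤ 1 := by
    rw [hZdef]
    refine le_trans (norm_sum_le _ _) ?_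
    have h : ∀ i : Fin k, ‖-(Complex.exp (Complex.I * θ * (i.1 + 1)) / k)‖ = (k:ℝ)⁻¹ := by
      intro i
      rw [norm_neg, norm_div, norm_exp_Itheta θ _ (by simp), Complex.norm_natCast, one_div]
    rw [Finset.sum_congr rfl fun i _ => h i, Finset.sum_const, Finset.card_univ,
      Fintype.card_fin, nsmul_eq_mul, mul_inv_cancel₀ hk0']
  have hbin := hasSum_binomial hα hnormZ
  have hsum := summable_tfun θ hα hk
  have h1 : ∑' x : Fin k → ℕ, tfun α θ x = (1 + Z) ^ (α:ℂ) := by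
    rw [tsum_eq_tsum_fiber zeta
      (fun n => Finset.piAntidiag (Finset.univ : Finset (Fin k)) n)
      mem_piAntidiag_iff _ hsum, ← hbin.tsum_eq]
    exact tsum_congr fun n => fiber_tfun_sum_zeta hk n
  have h2 : ∑' x : Fin k → ℕ, tfun α θ x
      = ∑' y : ℕ, Complex.exp (Complex.I * θ * y) *
          ((∑ x ∈ Omega k y, cfun α x : ℝ) : ℂ) := by
    rw [tsum_eq_tsum_fiber ysum (fun y => Omega k y) mem_Omega_iff _ hsum]
    exact tsum_congr fun y => fiber_tfun_sum_Y y
  rw [← hZ1, ← h1, h2]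
  exact tsum_congr fun y => rfl
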